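/- arXiv:2406.14965 — 5 statements merged into one kernel-verified Lean document; each statement's English description precedes it below -/
import Mathlib

section
/- The function f(p) = 1/(A + (P_T - P_W)/(M p) - n P_W/(M p ln p)) defined for p ∈ (0,1), where A = ((n-1)P_W + P_T)(M+δ-1)/M, with n ≥ 1, M ≥ 1, δ ≥ 0, P_T > P_W > 0, is strictly increasing on (0, p_m) and strictly decreasing on (p_m, 1), where p_m = exp((n - sqrt(n² + 4n(P_T/P_W - 1)))/(2(P_T/P_W - 1))). -/
set_option maxHeartbeats 1000000


/-- Saturated CB-Aloha lifetime throughput `f` is strictly increasing on `(0, p_m)`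
and strictly decreasing on `(p_m, 1)`. -/
theorem stmt0 (n M δ P_T P_W : ℝ) (hn : 1 ≤ n) (hM : 1 ≤ M) (hδ : 0 ≤ δ)
    (hPW : 0 < P_W) (hPT : P_W < P_T)
    (A p_m : ℝ)
    (hA : A = ((n - 1) * P_W + P_T) * (M + δ - 1) / M)
    (hpm : p_m = Real.exp ((n - Real.sqrt (n ^ 2 + 4 * n * (P_T / P_W - 1))) /
      (2 * (P_T / P_W - 1))))
    (f : ℝ → ℝ)
    (hf : ∀ p, f p = 1 / (A + (P_T - P_W) / (M * p) - n * P_W / (M * p * Real.log p))) :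
    StrictMonoOn f (Set.Ioo 0 p_m) ∧ StrictAntiOn f (Set.Ioo p_m 1) := by
  have hM0 : (0:ℝ) < M := lt_of_lt_of_le one_pos hM
  have hn0 : (0:ℝ) < n := lt_of_lt_of_le one_pos hn
  have hPT0 : 0 < P_T := hPW.trans hPT
  set b : ℝ := P_T / P_W - 1 with hbdef
  have hb : 0 < b := by
    have : 1 < P_T / P_W := (one_lt_div hPW).2 hPT
    simp [hbdef]; linarith
  have hPWb : P_W * b = P_T - P_W := by
    rw [hbdef]; field_simp
  set s : ℝ := Real.sqrt (n ^ 2 + 4 * n * b) with hsdef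
  have hs2 : s ^ 2 = n ^ 2 + 4 * n * b := Real.sq_sqrt (by positivity)
  have hs0 : 0 ≤ s := Real.sqrt_nonneg _
  have hns : n < s := by nlinarith
  set t_m : ℝ := (n - s) / (2 * b) with htmdef
  have htm0 : t_m < 0 := div_neg_of_neg_of_pos (by linarith) (by linarith)
  have hroot : b * t_m ^ 2 - n * t_m - n = 0 := by
    rw [htmdef]; field_simp; nlinarith [hs2]
  have hpm_eq : p_m = Real.exp t_m := hpm
  have hpm0 : 0 < p_m := hpm_eq ▸ Real.exp_pos _
  have hpm1 : p_m < 1 := by rw [hpm_eq]; exact Real.exp_lt_one_iff.mpr htm0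
  have hlogpm : Real.log p_m = t_m := by rw [hpm_eq, Real.log_exp]
  -- quadratic sign lemmas
  have hfac : ∀ t : ℝ, b * t ^ 2 - n * t - n = (t - t_m) * (b * (t + t_m) - n) := by
    intro t
    linear_combination hroot
  have hquad1 : ∀ t : ℝ, t < t_m → 0 < b * t ^ 2 - n * t - n := by
    intro t ht
    rw [hfac]
    apply mul_pos_of_neg_of_neg (by linarith)
    have : b * (t + t_m) < 0 := mul_neg_of_pos_of_neg hb (by linarith)
    linarith
  have hquad2 : ∀ t : ℝ, t_m < t → t < 0 → b * t ^ 2 - n * t - n < 0 := by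
    intro t ht ht0
    rw [hfac]
    apply mul_neg_of_pos_of_neg (by linarith)
    have : b * (t + t_m) < 0 := mul_neg_of_pos_of_neg hb (by linarith)
    linarith
  set g : ℝ → ℝ := fun p => A + (P_T - P_W) / (M * p) - n * P_W / (M * p * Real.log p)
    with hgdef
  have hA0 : 0 ≤ A := by
    rw [hA]
    apply div_nonneg _ hM0.le
    have : 0 ≤ (n - 1) * P_W + P_T := by nlinarith
    nlinarith
  have hgpos : ∀ p ∈ Set.Ioo (0:ℝ) 1, 0 < g p := by
    intro p hp
    have hlog : Real.log p < 0 := Real.log_neg hp.1 hp.2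
    have hMp : 0 < M * p := mul_pos hM0 hp.1
    have h1 : 0 < (P_T - P_W) / (M * p) := div_pos (by linarith) hMp
    have h2 : n * P_W / (M * p * Real.log p) < 0 := by
      apply div_neg_of_pos_of_neg (mul_pos hn0 hPW)
      exact mul_neg_of_pos_of_neg hMp hlog
    simp only [hgdef]; linarith
  -- derivative of g
  have hderiv : ∀ p ∈ Set.Ioo (0:ℝ) 1,
      HasDerivAt g ((-(P_T - P_W) * (Real.log p) ^ 2 + n * P_W * (Real.log p + 1)) /
        (M * p ^ 2 * (Real.log p) ^ 2)) p := by
    intro p hp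
    have hp0 : p ≠ 0 := ne_of_gt hp.1
    have hlog : Real.log p < 0 := Real.log_neg hp.1 hp.2
    have hlog0 : Real.log p ≠ 0 := ne_of_lt hlog
    have hMp : M * p ≠ 0 := by positivity
    have hMpl : M * p * Real.log p ≠ 0 := mul_ne_zero hMp hlog0
    have hu : HasDerivAt (fun x : ℝ => M * x) M p := by
      simpa using (hasDerivAt_id p).const_mul M
    have hv : HasDerivAt (fun x : ℝ => M * x * Real.log x)
        (M * Real.log p + (M * p) * p⁻¹) p := hu.mul (Real.hasDerivAt_log hp0)
    have h1 : HasDerivAt (fun x : ℝ => (P_T - P_W) / (M * x))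
        ((0 * (M * p) - (P_T - P_W) * M) / (M * p) ^ 2) p :=
      (hasDerivAt_const p (P_T - P_W)).div hu hMp
    have h2 : HasDerivAt (fun x : ℝ => n * P_W / (M * x * Real.log x))
        ((0 * (M * p * Real.log p) - n * P_W * (M * Real.log p + (M * p) * p⁻¹)) /
          (M * p * Real.log p) ^ 2) p :=
      (hasDerivAt_const p (n * P_W)).div hv hMpl
    have h3 := ((hasDerivAt_const p A).add h1).sub h2
    refine h3.congr_deriv ?_
    field_simp
    ring
  have hcont1 : ContinuousOn g (Set.Ioo 0 p_m) := by
    intro x hx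
    exact ((hderiv x ⟨hx.1, hx.2.trans hpm1⟩).differentiableAt.continuousAt).continuousWithinAt
  have hcont2 : ContinuousOn g (Set.Ioo p_m 1) := by
    intro x hx
    exact ((hderiv x ⟨hpm0.trans hx.1, hx.2⟩).differentiableAt.continuousAt).continuousWithinAt
  have hganti : StrictAntiOn g (Set.Ioo 0 p_m) := by
    apply strictAntiOn_of_deriv_neg (convex_Ioo _ _) hcont1
    intro x hx
    rw [interior_Ioo] at hx
    have hx1 : x ∈ Set.Ioo (0:ℝ) 1 := ⟨hx.1, hx.2.trans hpm1⟩
    rw [(hderiv x hx1).deriv]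
    have hlog : Real.log x < t_m := by
      rw [← hlogpm]; exact Real.log_lt_log hx.1 hx.2
    have hq := hquad1 _ hlog
    apply div_neg_of_neg_of_pos
    · have hid : -(P_T - P_W) * (Real.log x) ^ 2 + n * P_W * (Real.log x + 1) =
          -(P_W * (b * (Real.log x) ^ 2 - n * Real.log x - n)) := by
        linear_combination (Real.log x) ^ 2 * hPWb
      rw [hid]
      have := mul_pos hPW hq
      linarith
    · have hlt : Real.log x < 0 := by linarith
      have hl2 : 0 < (Real.log x) ^ 2 := by
        rw [pow_two]; exact mul_pos_of_neg_of_neg hlt hlt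
      exact mul_pos (mul_pos hM0 (pow_pos hx1.1 2)) hl2
  have hgmono : StrictMonoOn g (Set.Ioo p_m 1) := by
    apply strictMonoOn_of_deriv_pos (convex_Ioo _ _) hcont2
    intro x hx
    rw [interior_Ioo] at hx
    have hx1 : x ∈ Set.Ioo (0:ℝ) 1 := ⟨hpm0.trans hx.1, hx.2⟩
    rw [(hderiv x hx1).deriv]
    have hlog1 : t_m < Real.log x := by
      rw [← hlogpm]; exact Real.log_lt_log hpm0 hx.1
    have hlog2 : Real.log x < 0 := Real.log_neg hx1.1 hx1.2
    have hq := hquad2 _ hlog1 hlog2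
    apply div_pos
    · have hid : -(P_T - P_W) * (Real.log x) ^ 2 + n * P_W * (Real.log x + 1) =
          -(P_W * (b * (Real.log x) ^ 2 - n * Real.log x - n)) := by
        linear_combination (Real.log x) ^ 2 * hPWb
      rw [hid]
      have := mul_neg_of_pos_of_neg hPW hq
      linarith
    · have hl2 : 0 < (Real.log x) ^ 2 := by
        rw [pow_two]; exact mul_pos_of_neg_of_neg hlog2 hlog2
      exact mul_pos (mul_pos hM0 (pow_pos hx1.1 2)) hl2
  constructor
  · intro x hx y hy hxy
    rw [hf x, hf y]
    have hx1 : x ∈ Set.Ioo (0:ℝ) 1 := ⟨hx.1, hx.2.trans hpm1⟩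
    have hy1 : y ∈ Set.Ioo (0:ℝ) 1 := ⟨hy.1, hy.2.trans hpm1⟩
    have hgy : 0 < g y := hgpos y hy1
    have hlt : g y < g x := hganti hx hy hxy
    exact one_div_lt_one_div_of_lt hgy hlt
  · intro x hx y hy hxy
    rw [hf x, hf y]
    have hx1 : x ∈ Set.Ioo (0:ℝ) 1 := ⟨hpm0.trans hx.1, hx.2⟩
    have hgx : 0 < g x := hgpos x hx1
    have hlt : g x < g y := hgmono hx hy hxy
    exact one_div_lt_one_div_of_lt hgx hlt
end

section
/- For n ≥ 1, E > 0, σ > 0, P_T > P_W > 0, the function U(p) = (E/σ)/((P_T - P_W)/p - n·P_W/(p·ln p)) on (0,1) attains its maximum at p = p_m = exp((n - sqrt(n² + 4n(P_T/P_W - 1)))/(2(P_T/P_W - 1))); U is strictly increasing on (0, p_m) and strictly decreasing on (p_m, 1). -/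
set_option maxHeartbeats 1600000 in
/-- The saturated PB-Aloha lifetime throughput `U` attains its maximum on `(0,1)` at `p_m`,
strictly increasing before and strictly decreasing after. -/
theorem stmt5 (n E σ P_T P_W : ℝ) (hn : 1 ≤ n) (hE : 0 < E) (hσ : 0 < σ)
    (hPW : 0 < P_W) (hPT : P_W < P_T)
    (p_m : ℝ)
    (hpm : p_m = Real.exp ((n - Real.sqrt (n ^ 2 + 4 * n * (P_T / P_W - 1))) /
      (2 * (P_T / P_W - 1))))
    (U : ℝ → ℝ)
    (hU : ∀ p, U p = (E / σ) / ((P_T - P_W) / p - n * P_W / (p * Real.log p))) :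
    (∀ p ∈ Set.Ioo (0 : ℝ) 1, U p ≤ U p_m) ∧
    StrictMonoOn U (Set.Ioo 0 p_m) ∧ StrictAntiOn U (Set.Ioo p_m 1) := by
  have hn0 : (0:ℝ) < n := lt_of_lt_of_le one_pos hn
  set a : ℝ := P_T - P_W with ha_def
  set b : ℝ := n * P_W with hb_def
  have ha : 0 < a := sub_pos.2 hPT
  have hb : 0 < b := mul_pos hn0 hPW
  set C : ℝ := E / σ with hC_def
  have hC : 0 < C := div_pos hE hσ
  set s : ℝ := Real.sqrt (b^2 + 4*a*b) with hs_def
  have hs2 : s^2 = b^2 + 4*a*b := Real.sq_sqrt (by positivity)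
  have hs0 : 0 < s := Real.sqrt_pos.2 (by positivity)
  have hbs : b < s := by nlinarith
  set t₀ : ℝ := (b - s)/(2*a) with ht0_def
  have ht0 : t₀ < 0 := div_neg_of_neg_of_pos (by linarith) (by linarith)
  have hr1 : (1:ℝ) < P_T / P_W := (one_lt_div hPW).2 hPT
  have hpm_eq : p_m = Real.exp t₀ := by
    rw [hpm]
    congr 1
    have hkey : Real.sqrt (n ^ 2 + 4 * n * (P_T / P_W - 1)) = s / P_W := by
      have hX : (0:ℝ) ≤ n ^ 2 + 4 * n * (P_T / P_W - 1) := by nlinarith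
      have hss : s = Real.sqrt ((n ^ 2 + 4 * n * (P_T / P_W - 1)) * P_W ^ 2) := by
        rw [hs_def]
        congr 1
        rw [hb_def, ha_def]
        field_simp
      rw [eq_div_iff hPW.ne', hss, Real.sqrt_mul hX, Real.sqrt_sq hPW.le]
    rw [hkey, ht0_def, hb_def, ha_def]
    rw [div_eq_div_iff (by linarith) (by positivity)]
    field_simp
  have hpm0 : 0 < p_m := hpm_eq ▸ Real.exp_pos _
  have hpm1 : p_m < 1 := by
    rw [hpm_eq]
    exact Real.exp_lt_one_iff.2 ht0
  set V : ℝ → ℝ := fun p => C * (p * Real.log p) / (a * Real.log p - b) with hV_def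
  clear_value a b C s t₀ V
  have hden : ∀ x ∈ Set.Ioo (0:ℝ) 1, a * Real.log x - b < 0 := by
    intro x hx
    have hlog : Real.log x < 0 := Real.log_neg hx.1 hx.2
    nlinarith
  have hUV : ∀ x ∈ Set.Ioo (0:ℝ) 1, U x = V x := by
    intro x hx
    have hx0 : x ≠ 0 := hx.1.ne'
    have hlog : Real.log x < 0 := Real.log_neg hx.1 hx.2
    have hd := (hden x hx).ne
    have hlog' : Real.log x ≠ 0 := hlog.ne
    have hxl : x * Real.log x ≠ 0 := mul_ne_zero hx0 hlog'
    have hrw : a / x - b / (x * Real.log x) = (a * Real.log x - b) / (x * Real.log x) := by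
      field_simp
    rw [hU, hrw, div_div_eq_mul_div, hV_def]
  have hderiv : ∀ x ∈ Set.Ioo (0:ℝ) 1,
      HasDerivAt V (C * (a * (Real.log x)^2 - b * Real.log x - b) / (a * Real.log x - b)^2) x := by
    intro x hx
    have hx0 : (0:ℝ) < x := hx.1
    have hd := (hden x hx).ne
    have h1 : HasDerivAt (fun p : ℝ => C * (p * Real.log p))
        (C * (1 * Real.log x + x * x⁻¹)) x :=
      ((hasDerivAt_id x).mul (Real.hasDerivAt_log hx0.ne')).const_mul C
    have h2 : HasDerivAt (fun p : ℝ => a * Real.log p - b) (a * x⁻¹) x :=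
      ((Real.hasDerivAt_log hx0.ne').const_mul a).sub_const b
    have h3 := h1.div h2 hd
    have heq : (C * (1 * Real.log x + x * x⁻¹) * (a * Real.log x - b) -
        C * (x * Real.log x) * (a * x⁻¹)) / (a * Real.log x - b) ^ 2
        = C * (a * (Real.log x)^2 - b * Real.log x - b) / (a * Real.log x - b)^2 := by
      have hx0' : x ≠ 0 := hx0.ne'
      congr 1
      field_simp
      ring
    rw [hV_def]
    exact heq ▸ h3
  have hqpos : ∀ x ∈ Set.Ioo (0:ℝ) p_m,
      0 < a * (Real.log x)^2 - b * Real.log x - b := by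
    intro x hx
    have hlt : Real.log x < t₀ := by
      have := Real.log_lt_log hx.1 hx.2
      rwa [hpm_eq, Real.log_exp] at this
    set t := Real.log x with ht_def
    clear_value t
    have h2 : s < b - 2*a*t := by
      rw [ht0_def, lt_div_iff₀ (by linarith : (0:ℝ) < 2*a)] at hlt
      linarith
    have h3 := mul_self_lt_mul_self hs0.le h2
    have h4a : (0:ℝ) < 4*a := by linarith
    have h5 : 4*a*0 < 4*a*(a * t^2 - b * t - b) := by
      rw [mul_zero]
      nlinarith [h3, hs2]
    have := (mul_lt_mul_iff_right₀ h4a).1 h5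
    linarith
  have hqneg : ∀ x ∈ Set.Ioo p_m (1:ℝ),
      a * (Real.log x)^2 - b * Real.log x - b < 0 := by
    intro x hx
    have hx0 : 0 < x := lt_trans hpm0 hx.1
    have hlog : Real.log x < 0 := Real.log_neg hx0 hx.2
    have hgt : t₀ < Real.log x := by
      have := Real.log_lt_log hpm0 hx.1
      rwa [hpm_eq, Real.log_exp] at this
    set t := Real.log x with ht_def
    clear_value t
    have h2 : b - 2*a*t < s := by
      rw [ht0_def, div_lt_iff₀ (by linarith : (0:ℝ) < 2*a)] at hgt
      linarith
    have h1 : 0 ≤ b - 2*a*t := by nlinarith [mul_pos ha (neg_pos.2 hlog)]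
    have h3 := mul_self_lt_mul_self h1 h2
    have h4a : (0:ℝ) < 4*a := by linarith
    have h5 : 4*a*(a * t^2 - b * t - b) < 4*a*0 := by
      rw [mul_zero]
      nlinarith [h3, hs2]
    have := (mul_lt_mul_iff_right₀ h4a).1 h5
    linarith
  have hsub1 : Set.Ioc (0:ℝ) p_m ⊆ Set.Ioo 0 1 :=
    fun x hx => ⟨hx.1, lt_of_le_of_lt hx.2 hpm1⟩
  have hsub2 : Set.Ico p_m 1 ⊆ Set.Ioo (0:ℝ) 1 :=
    fun x hx => ⟨lt_of_lt_of_le hpm0 hx.1, hx.2⟩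
  have hmonoV : StrictMonoOn V (Set.Ioc 0 p_m) := by
    apply strictMonoOn_of_deriv_pos (convex_Ioc _ _)
    · exact fun x hx => ((hderiv x (hsub1 hx)).continuousAt).continuousWithinAt
    · intro x hx
      rw [interior_Ioc] at hx
      have hx1 : x ∈ Set.Ioo (0:ℝ) 1 := ⟨hx.1, hx.2.trans hpm1⟩
      rw [(hderiv x hx1).deriv]
      have hq := hqpos x hx
      have hd := hden x hx1
      have hsq : (0:ℝ) < (a * Real.log x - b)^2 := by
        rw [sq]; exact mul_pos_of_neg_of_neg hd hd
      exact div_pos (mul_pos hC hq) hsq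
  have hantiV : StrictAntiOn V (Set.Ico p_m 1) := by
    apply strictAntiOn_of_deriv_neg (convex_Ico _ _)
    · exact fun x hx => ((hderiv x (hsub2 hx)).continuousAt).continuousWithinAt
    · intro x hx
      rw [interior_Ico] at hx
      have hx1 : x ∈ Set.Ioo (0:ℝ) 1 := ⟨lt_trans hpm0 hx.1, hx.2⟩
      rw [(hderiv x hx1).deriv]
      have hq := hqneg x hx
      have hd := hden x hx1
      have hsq : (0:ℝ) < (a * Real.log x - b)^2 := by
        rw [sq]; exact mul_pos_of_neg_of_neg hd hd
      exact div_neg_of_neg_of_pos (mul_neg_of_pos_of_neg hC hq) hsq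
  have hmonoU : StrictMonoOn U (Set.Ioc 0 p_m) := by
    intro x hx y hy hxy
    rw [hUV x (hsub1 hx), hUV y (hsub1 hy)]
    exact hmonoV hx hy hxy
  have hantiU : StrictAntiOn U (Set.Ico p_m 1) := by
    intro x hx y hy hxy
    rw [hUV x (hsub2 hx), hUV y (hsub2 hy)]
    exact hantiV hx hy hxy
  refine ⟨?_, hmonoU.mono (fun x hx => ⟨hx.1, hx.2.le⟩),
    hantiU.mono (fun x hx => ⟨hx.1.le, hx.2⟩)⟩
  intro p hp
  rcases lt_trichotomy p p_m with h|h|h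
  · exact (hmonoU ⟨hp.1, h.le⟩ ⟨hpm0, le_refl _⟩ h).le
  · rw [h]
  · exact (hantiU ⟨le_refl _, hpm1⟩ ⟨h.le, hp.2⟩ h).le
end

section
/- For p ∈ (0,1), n ≥ 1, P_T > P_W > 0: the map p ↦ (P_T - P_W)/p - nP_W/(p ln p) tends to +∞ as p → 0⁺ and as p → 1⁻, is continuous on (0,1), and attains its minimum value at p_m = exp((n - sqrt(n² + 4n(P_T/P_W - 1)))/(2(P_T/P_W - 1))). -/
open Real Set Filter

lemma gmin_aux (a b t : ℝ) (ha : 0 < a) (hb : 0 < b) (ht : t < 0)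
    (hroot : a * t ^ 2 = b * t + b) :
    ∀ s < 0, (a - b / t) * Real.exp (-t) ≤ (a - b / s) * Real.exp (-s) := by
  set g : ℝ → ℝ := fun s => (a - b / s) * Real.exp (-s) with hg
  have hderiv : ∀ s : ℝ, s ≠ 0 → HasDerivAt g
      (Real.exp (-s) * (b + b * s - a * s ^ 2) / s ^ 2) s := by
    intro s hs
    have h1 : HasDerivAt (fun x : ℝ => a - b / x) (b / s ^ 2) s := by
      have := ((hasDerivAt_inv hs).const_mul b).const_sub a
      simp only [← div_eq_mul_inv] at this
      exact this.congr_deriv (by field_simp)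
    have h2 : HasDerivAt (fun x : ℝ => Real.exp (-x)) (-Real.exp (-s)) s := by
      have := (Real.hasDerivAt_exp (-s)).comp s ((hasDerivAt_id s).neg)
      exact this.congr_deriv (by ring)
    have := h1.mul h2
    exact this.congr_deriv (by field_simp; ring)
  have hcont : ∀ s : ℝ, s ≠ 0 → ContinuousAt g s := fun s hs => (hderiv s hs).continuousAt
  have hanti : StrictAntiOn g (Iic t) := by
    apply strictAntiOn_of_deriv_neg (convex_Iic t)
    · intro s hs
      exact (hcont s (by rintro rfl; exact absurd hs (not_le.2 ht))).continuousWithinAt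
    · intro s hs
      rw [interior_Iic] at hs
      have hst : s < t := hs
      have hs0 : s ≠ 0 := ne_of_lt (hst.trans ht)
      rw [(hderiv s hs0).deriv]
      have hq : b + b * s - a * s ^ 2 < 0 := by
        have h1 : 0 < t - s := by linarith
        have h2 : 0 < b - a * (s + t) := by nlinarith
        nlinarith [mul_pos h1 h2]
      have := Real.exp_pos (-s)
      have hs2 : 0 < s ^ 2 := by positivity
      exact div_neg_of_neg_of_pos (by nlinarith) hs2
  have hmono : StrictMonoOn g (Ico t 0) := by
    apply strictMonoOn_of_deriv_pos (convex_Ico t 0)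
    · intro s hs
      exact (hcont s (ne_of_lt hs.2)).continuousWithinAt
    · intro s hs
      rw [interior_Ico] at hs
      obtain ⟨hts, hs0'⟩ := hs
      have hs0 : s ≠ 0 := ne_of_lt hs0'
      rw [(hderiv s hs0).deriv]
      have hq : 0 < b + b * s - a * s ^ 2 := by
        have h1 : 0 < s - t := by linarith
        have h2 : 0 < b - a * (s + t) := by nlinarith
        nlinarith [mul_pos h1 h2]
      have := Real.exp_pos (-s)
      have hs2 : 0 < s ^ 2 := by positivity
      exact div_pos (by nlinarith) hs2
  intro s hs
  rcases lt_trichotomy s t with h | h | h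
  · exact le_of_lt (hanti (mem_Iic.2 (le_of_lt h)) (mem_Iic.2 le_rfl) h)
  · subst h; exact le_rfl
  · exact le_of_lt (hmono ⟨le_rfl, ht⟩ ⟨le_of_lt h, hs⟩ h)

/-- The reciprocal saturated PB-Aloha lifetime throughput tends to `+∞` at both endpoints
of `(0,1)`, is continuous on `(0,1)`, and attains its minimum at `p_m`. -/
theorem stmt12 (n P_T P_W : ℝ) (hn : 1 ≤ n) (hPW : 0 < P_W) (hPT : P_W < P_T)
    (p_m : ℝ)
    (hpm : p_m = Real.exp ((n - Real.sqrt (n ^ 2 + 4 * n * (P_T / P_W - 1))) /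
      (2 * (P_T / P_W - 1))))
    (F : ℝ → ℝ)
    (hF : ∀ p, F p = (P_T - P_W) / p - n * P_W / (p * Real.log p)) :
    Filter.Tendsto F (nhdsWithin 0 (Set.Ioi 0)) Filter.atTop ∧
    Filter.Tendsto F (nhdsWithin 1 (Set.Iio 1)) Filter.atTop ∧
    ContinuousOn F (Set.Ioo 0 1) ∧
    (p_m ∈ Set.Ioo (0 : ℝ) 1 ∧ ∀ p ∈ Set.Ioo (0 : ℝ) 1, F p_m ≤ F p) := by
  have ha : 0 < P_T - P_W := sub_pos.2 hPT
  have hb : 0 < n * P_W := mul_pos (lt_of_lt_of_le one_pos hn) hPW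
  have hn0 : 0 < n := lt_of_lt_of_le one_pos hn
  set c : ℝ := P_T / P_W - 1 with hc
  have hc0 : 0 < c := by
    have : 1 < P_T / P_W := (one_lt_div hPW).2 hPT
    simp [hc]; linarith
  set s0 : ℝ := Real.sqrt (n ^ 2 + 4 * n * c) with hs0
  set t : ℝ := (n - s0) / (2 * c) with htdef
  have hs0nn : 0 ≤ s0 := Real.sqrt_nonneg _
  have hs0sq : s0 ^ 2 = n ^ 2 + 4 * n * c := by
    rw [hs0, Real.sq_sqrt]; positivity
  have hns0 : n < s0 := by nlinarith
  have ht : t < 0 := div_neg_of_neg_of_pos (by linarith) (by linarith)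
  have h2ct : 2 * c * t = n - s0 := by
    rw [htdef]; field_simp
  have hct : c * t ^ 2 = n * t + n := by
    have hsq : (n - 2 * c * t) ^ 2 = n ^ 2 + 4 * n * c := by
      rw [show n - 2 * c * t = s0 by linarith]; exact hs0sq
    have hc4 : 4 * c * (c * t ^ 2 - n * t - n) = 0 := by linear_combination hsq
    have h4c : (4 : ℝ) * c ≠ 0 := by positivity
    have := (mul_eq_zero.1 hc4).resolve_left h4c
    linarith
  have haeq : P_T - P_W = c * P_W := by
    rw [hc]; field_simp
  have hroot : (P_T - P_W) * t ^ 2 = (n * P_W) * t + n * P_W := by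
    rw [haeq]; nlinarith [hct]
  have hpmt : p_m = Real.exp t := by rw [hpm]
  have hpm_mem : p_m ∈ Set.Ioo (0 : ℝ) 1 := by
    rw [hpmt]
    exact ⟨Real.exp_pos t, Real.exp_lt_one_iff.2 ht⟩
  -- rewriting F on (0,1)
  have hFrw : ∀ p ∈ Set.Ioo (0 : ℝ) 1,
      F p = (P_T - P_W - n * P_W / Real.log p) * Real.exp (-Real.log p) := by
    intro p hp
    have hp0 : p ≠ 0 := ne_of_gt hp.1
    have hlp : Real.log p < 0 := Real.log_neg hp.1 hp.2
    have hlp0 : Real.log p ≠ 0 := ne_of_lt hlp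
    rw [hF, Real.exp_neg, Real.exp_log hp.1]
    field_simp
  refine ⟨?_, ?_, ?_, hpm_mem, ?_⟩
  · -- p → 0⁺
    have hev : ∀ᶠ p in nhdsWithin (0:ℝ) (Set.Ioi 0), (P_T - P_W) * p⁻¹ ≤ F p := by
      have h1 : ∀ᶠ p in nhdsWithin (0:ℝ) (Set.Ioi 0), p < 1 :=
        (eventually_lt_nhds (by norm_num : (0:ℝ) < 1)).filter_mono nhdsWithin_le_nhds
      filter_upwards [h1, self_mem_nhdsWithin] with p hp1 hp0
      have hp0' : (0:ℝ) < p := hp0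
      have hlp : Real.log p < 0 := Real.log_neg hp0' hp1
      have hplog : p * Real.log p < 0 := mul_neg_of_pos_of_neg hp0' hlp
      have h2 : n * P_W / (p * Real.log p) < 0 := div_neg_of_pos_of_neg hb hplog
      rw [hF, div_eq_mul_inv]
      linarith
    exact tendsto_atTop_mono' _ hev (tendsto_inv_nhdsGT_zero.const_mul_atTop ha)
  · -- p → 1⁻
    have hev01 : ∀ᶠ p in nhdsWithin (1:ℝ) (Set.Iio 1), p ∈ Set.Ioo (0:ℝ) 1 := by
      have h1 : ∀ᶠ p in nhdsWithin (1:ℝ) (Set.Iio 1), (0:ℝ) < p :=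
        (eventually_gt_nhds (by norm_num : (0:ℝ) < 1)).filter_mono nhdsWithin_le_nhds
      filter_upwards [h1, self_mem_nhdsWithin] with p h1 h2 using ⟨h1, h2⟩
    have hlognz : ∀ᶠ p in nhdsWithin (1:ℝ) (Set.Iio 1), p * Real.log p < 0 := by
      filter_upwards [hev01] with p hp
      exact mul_neg_of_pos_of_neg hp.1 (Real.log_neg hp.1 hp.2)
    have hneg : Filter.Tendsto (fun p : ℝ => -(p * Real.log p))
        (nhdsWithin 1 (Set.Iio 1)) (nhdsWithin 0 (Set.Ioi 0)) := by
      apply tendsto_nhdsWithin_of_tendsto_nhds_of_eventually_within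
      · have hcont : ContinuousAt (fun p : ℝ => -(p * Real.log p)) 1 :=
          (continuousAt_id.mul (Real.continuousAt_log one_ne_zero)).neg
        have := hcont.tendsto.mono_left (nhdsWithin_le_nhds (s := Set.Iio 1))
        simpa using this
      · filter_upwards [hlognz] with p hp using by simpa using hp
    have hinv : Filter.Tendsto (fun p : ℝ => (-(p * Real.log p))⁻¹)
        (nhdsWithin 1 (Set.Iio 1)) Filter.atTop := tendsto_inv_nhdsGT_zero.comp hneg
    have hterm : Filter.Tendsto (fun p : ℝ => (n * P_W) * (-(p * Real.log p))⁻¹)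
        (nhdsWithin 1 (Set.Iio 1)) Filter.atTop := hinv.const_mul_atTop hb
    have hfirst : Filter.Tendsto (fun p : ℝ => (P_T - P_W) / p)
        (nhdsWithin 1 (Set.Iio 1)) (nhds (P_T - P_W)) := by
      have hcont : ContinuousAt (fun p : ℝ => (P_T - P_W) / p) 1 :=
        (continuousAt_const.div continuousAt_id one_ne_zero)
      have := hcont.tendsto.mono_left (nhdsWithin_le_nhds (s := Set.Iio 1))
      simpa using this
    have := hfirst.add_atTop hterm
    apply this.congr'
    filter_upwards [hev01] with p hp
    have hp0 : p ≠ 0 := ne_of_gt hp.1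
    have hlp0 : Real.log p ≠ 0 := ne_of_lt (Real.log_neg hp.1 hp.2)
    rw [hF]
    field_simp
    ring
  · -- continuity
    intro p hp
    have hp0 : p ≠ 0 := ne_of_gt hp.1
    have hlp0 : Real.log p ≠ 0 := ne_of_lt (Real.log_neg hp.1 hp.2)
    have : ContinuousAt F p := by
      have hFe : F = fun q => (P_T - P_W) / q - n * P_W / (q * Real.log q) := funext hF
      rw [hFe]
      exact (continuousAt_const.div continuousAt_id hp0).sub
        (continuousAt_const.div (continuousAt_id.mul (Real.continuousAt_log hp0))
          (mul_ne_zero hp0 hlp0))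
    exact this.continuousWithinAt
  · -- minimum
    intro p hp
    have key := gmin_aux (P_T - P_W) (n * P_W) t ha hb ht hroot (Real.log p)
      (Real.log_neg hp.1 hp.2)
    have h1 : F p_m = (P_T - P_W - n * P_W / t) * Real.exp (-t) := by
      rw [hFrw p_m hpm_mem, hpmt, Real.log_exp]
    have h2 : F p = (P_T - P_W - n * P_W / Real.log p) * Real.exp (-Real.log p) :=
      hFrw p hp
    rw [h1, h2]
    simpa [sub_sub] using key
end

section
/- Under the relations n_S/n_F = p/(1-p) (for p ∈ (0,1)), T = n_I + n_W + n_F + n_S(M+δ), the energy constraint P_W(n_I + n_W) + P_T(n_F + n_S(M+δ)) = E/σ, and the saturation conditions n_I = 0 and n_S/T = p ln p / (n p ln p (M+δ-1) - n) (with n ≥ 1, M ≥ 1, δ ≥ 0, P_T ≥ P_W > 0, E, σ > 0), the lifetime satisfies T = (E/σ)(1 - p ln p (M+δ-1)) / (P_W - ((n-1)P_W + P_T)(M+δ-1) p ln p / n - (P_T - P_W) ln p / n). -/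
/-- Saturated-case lifetime derivation (Lemma 1): the balance equations determine
`T` in closed form. -/
theorem stmt14 (n M δ E σ P_T P_W p n_I n_W n_F n_S T : ℝ)
    (hn : 1 ≤ n) (hM : 1 ≤ M) (hδ : 0 ≤ δ) (hE : 0 < E) (hσ : 0 < σ)
    (hPW : 0 < P_W) (hPT : P_W ≤ P_T) (hp : p ∈ Set.Ioo (0 : ℝ) 1)
    (hI : 0 ≤ n_I) (hW : 0 ≤ n_W) (hF : 0 ≤ n_F) (hS : 0 ≤ n_S)
    (hratio : n_S / n_F = p / (1 - p))
    (hTdef : T = n_I + n_W + n_F + n_S * (M + δ))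
    (henergy : P_W * (n_I + n_W) + P_T * (n_F + n_S * (M + δ)) = E / σ)
    (hsat : n_I = 0)
    (hrate : n_S / T = p * Real.log p / (n * p * Real.log p * (M + δ - 1) - n)) :
    T = (E / σ) * (1 - p * Real.log p * (M + δ - 1)) /
      (P_W - ((n - 1) * P_W + P_T) * (M + δ - 1) * p * Real.log p / n -
        (P_T - P_W) * Real.log p / n) := by
  obtain ⟨hp0, hp1⟩ := hp
  set L := Real.log p with hLdef
  have hL : L < 0 := Real.log_neg hp0 hp1
  have hpL : p * L < 0 := mul_neg_of_pos_of_neg hp0 hL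
  have hn0 : (0:ℝ) < n := lt_of_lt_of_le one_pos hn
  have hMδ : (0:ℝ) ≤ M + δ - 1 := by linarith
  have hprod : (0:ℝ) ≤ n * p * (M + δ - 1) := by positivity
  have hD : n * p * L * (M + δ - 1) - n < 0 := by
    nlinarith [mul_nonpos_of_nonneg_of_nonpos hprod hL.le]
  -- n_F > 0
  have hF' : 0 < n_F := by
    rcases lt_or_eq_of_le hF with h | h
    · exact h
    · exfalso
      rw [← h, div_zero] at hratio
      have : 0 < p / (1 - p) := div_pos hp0 (by linarith)
      linarith [this, hratio]
  -- ratio cleared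
  have e1 : n_S * (1 - p) = p * n_F := by
    have := (div_eq_div_iff (ne_of_gt hF') (by linarith : (1:ℝ) - p ≠ 0)).mp hratio
    linarith [this]
  -- T > 0
  have hMδ1 : (1:ℝ) ≤ M + δ := by linarith
  have hT : 0 < T := by
    rw [hTdef, hsat]; nlinarith
  -- rate cleared
  have e4 : n_S * (n * p * L * (M + δ - 1) - n) = T * (p * L) := by
    have := (div_eq_div_iff (ne_of_gt hT) (ne_of_lt hD)).mp hrate
    linarith [this]
  -- energy combined
  have eA : p * (E / σ) = p * P_W * T + (P_T - P_W) * n_S * (1 - p + p * (M + δ)) := by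
    rw [hsat] at hTdef henergy
    linear_combination (-p) * henergy + (-(p * P_W)) * hTdef + (-(P_T - P_W)) * e1
  -- key equation
  have key : p * (E / σ) * (n * p * L * (M + δ - 1) - n) =
      T * p * (((n - 1) * P_W + P_T) * (M + δ - 1) * p * L + (P_T - P_W) * L - n * P_W) := by
    linear_combination (n * p * L * (M + δ - 1) - n) * eA +
      (P_T - P_W) * (1 - p + p * (M + δ)) * e4
  have hc : (0:ℝ) ≤ ((n - 1) * P_W + P_T) * (M + δ - 1) * p :=
    mul_nonneg (mul_nonneg (by nlinarith) hMδ) hp0.le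
  have h1 : ((n - 1) * P_W + P_T) * (M + δ - 1) * p * L ≤ 0 :=
    mul_nonpos_of_nonneg_of_nonpos hc hL.le
  have h2 : (P_T - P_W) * L ≤ 0 := mul_nonpos_of_nonneg_of_nonpos (by linarith) hL.le
  have hden : 0 < P_W - ((n - 1) * P_W + P_T) * (M + δ - 1) * p * L / n -
      (P_T - P_W) * L / n := by
    have h3 : ((n - 1) * P_W + P_T) * (M + δ - 1) * p * L / n ≤ 0 :=
      div_nonpos_of_nonpos_of_nonneg h1 (le_of_lt hn0)
    have h4 : (P_T - P_W) * L / n ≤ 0 :=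
      div_nonpos_of_nonpos_of_nonneg h2 (le_of_lt hn0)
    linarith
  rw [eq_div_iff (ne_of_gt hden)]
  have hn0' : n ≠ 0 := ne_of_gt hn0
  have h6 : T * (n * P_W - ((n - 1) * P_W + P_T) * (M + δ - 1) * p * L - (P_T - P_W) * L)
      = E / σ * (1 - p * L * (M + δ - 1)) * n :=
    mul_right_cancel₀ (ne_of_gt hp0) (by linear_combination key)
  have hE6 : E / σ * σ = E := div_mul_cancel₀ E (ne_of_gt hσ)
  field_simp
  linear_combination σ * h6 + n * (1 - p * L * (M + δ - 1)) * hE6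
end

section
/- Let n ≥ 1, P_T > P_W > 0, and define F(p) = (P_T - P_W)/p - nP_W/(p ln p) on (0,1). If p₁, p₂ ∈ (0,1) with p_m < p₁ < p₂ < 1 where p_m = exp((n - sqrt(n²+4n(P_T/P_W -1)))/(2(P_T/P_W -1))), then F(p₁) < F(p₂). Consequently, for any constrained set {p ∈ (0,1) : p ≥ p_c} with p_c > p_m, the function 1/F is maximized at p = p_c. -/
/-- Key quadratic inequality. -/
lemma stmt15_key (a b L : ℝ) (ha : 0 < a) (hb : 0 < b) (hL : L < 0)
    (h : (b - Real.sqrt (b ^ 2 + 4 * a * b)) / (2 * a) < L) :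
    a * L ^ 2 - b * L - b < 0 := by
  have hs : Real.sqrt (b ^ 2 + 4 * a * b) ^ 2 = b ^ 2 + 4 * a * b :=
    Real.sq_sqrt (by positivity)
  have h2 : b - Real.sqrt (b ^ 2 + 4 * a * b) < 2 * a * L := by
    have := (div_lt_iff₀ (by positivity : (0:ℝ) < 2 * a)).mp h
    linarith
  have h3 : 0 < b - 2 * a * L := by nlinarith
  have h4 : Real.sqrt (b ^ 2 + 4 * a * b) > b - 2 * a * L := by linarith
  have h5 : (b - 2 * a * L) ^ 2 < b ^ 2 + 4 * a * b := by nlinarith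
  nlinarith

/-- `F` is strictly increasing past `p_m`; hence on the constrained set `{p ≥ p_c}` with
`p_c > p_m`, `1/F` is maximized at `p_c`. -/
theorem stmt15 (n P_T P_W : ℝ) (hn : 1 ≤ n) (hPW : 0 < P_W) (hPT : P_W < P_T)
    (p_m : ℝ)
    (hpm : p_m = Real.exp ((n - Real.sqrt (n ^ 2 + 4 * n * (P_T / P_W - 1))) /
      (2 * (P_T / P_W - 1))))
    (F : ℝ → ℝ)
    (hF : ∀ p, F p = (P_T - P_W) / p - n * P_W / (p * Real.log p)) :
    (∀ p₁ p₂ : ℝ, p_m < p₁ → p₁ < p₂ → p₂ < 1 → F p₁ < F p₂) ∧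
    (∀ p_c : ℝ, p_m < p_c → p_c < 1 →
      ∀ p ∈ Set.Ioo (0 : ℝ) 1, p_c ≤ p → 1 / F p ≤ 1 / F p_c) := by
  have hn0 : 0 < n := lt_of_lt_of_le one_pos hn
  have ha : 0 < P_T - P_W := sub_pos.mpr hPT
  have hb : 0 < n * P_W := mul_pos hn0 hPW
  have hpm0 : 0 < p_m := hpm ▸ Real.exp_pos _
  -- log p_m in terms of a, b
  have hlogpm : Real.log p_m =
      (n * P_W - Real.sqrt ((n * P_W) ^ 2 + 4 * (P_T - P_W) * (n * P_W))) /
        (2 * (P_T - P_W)) := by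
    rw [hpm, Real.log_exp]
    have hX : (n * P_W) ^ 2 + 4 * (P_T - P_W) * (n * P_W)
        = P_W ^ 2 * (n ^ 2 + 4 * n * (P_T / P_W - 1)) := by
      field_simp
    rw [hX, Real.sqrt_mul (sq_nonneg P_W), Real.sqrt_sq hPW.le]
    have hr : 0 < P_T / P_W - 1 := sub_pos.mpr ((one_lt_div hPW).mpr hPT)
    rw [div_eq_div_iff (by positivity : (2 * (P_T / P_W - 1)) ≠ 0)
      (by positivity : (2 * (P_T - P_W)) ≠ 0)]
    field_simp
  -- the derivative expression
  set D : ℝ → ℝ := fun x =>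
    ((n * P_W) * (Real.log x + 1) - (P_T - P_W) * (Real.log x) ^ 2)
      / (x ^ 2 * (Real.log x) ^ 2) with hD
  have hderiv : ∀ x ∈ Set.Ioo p_m 1, HasDerivAt F (D x) x := by
    intro x hx
    have hx0 : 0 < x := lt_trans hpm0 hx.1
    have hx1 : x < 1 := hx.2
    have hL : Real.log x < 0 := Real.log_neg hx0 hx1
    have hLne : Real.log x ≠ 0 := ne_of_lt hL
    have hxLne : x * Real.log x ≠ 0 := mul_ne_zero hx0.ne' hLne
    have h1 : HasDerivAt (fun p : ℝ => (P_T - P_W) * p⁻¹)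
        ((P_T - P_W) * (-(x ^ 2)⁻¹)) x := (hasDerivAt_inv hx0.ne').const_mul _
    have h2 : HasDerivAt (fun p : ℝ => p * Real.log p) (Real.log x + 1) x := by
      have := (hasDerivAt_id' x).mul (Real.hasDerivAt_log hx0.ne')
      exact this.congr_deriv (by rw [mul_inv_cancel₀ hx0.ne']; ring)
    have h3 : HasDerivAt (fun p : ℝ => (n * P_W) * (p * Real.log p)⁻¹)
        ((n * P_W) * (-(Real.log x + 1) / (x * Real.log x) ^ 2)) x :=
      (h2.inv hxLne).const_mul _
    have h4 := h1.sub h3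
    have hFeq : F = fun p : ℝ => (P_T - P_W) * p⁻¹ - (n * P_W) * (p * Real.log p)⁻¹ := by
      funext p
      rw [hF p, div_eq_mul_inv, div_eq_mul_inv]
    rw [hFeq]
    refine HasDerivAt.congr_deriv h4 ?_
    rw [hD]
    field_simp
    ring
  have hDpos : ∀ x ∈ Set.Ioo p_m 1, 0 < D x := by
    intro x hx
    have hx0 : 0 < x := lt_trans hpm0 hx.1
    have hL : Real.log x < 0 := Real.log_neg hx0 hx.2
    have hlt : Real.log p_m < Real.log x := Real.log_lt_log hpm0 hx.1
    have hkey : (P_T - P_W) * (Real.log x) ^ 2 - (n * P_W) * Real.log x - n * P_W < 0 := by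
      refine stmt15_key _ _ _ ha hb hL ?_
      rw [← hlogpm]; exact hlt
    have hL2 : 0 < (Real.log x) ^ 2 := by nlinarith
    rw [hD]
    exact div_pos (by linarith) (mul_pos (pow_pos hx0 2) hL2)
  have mono : StrictMonoOn F (Set.Ioo p_m 1) := by
    apply strictMonoOn_of_deriv_pos (convex_Ioo _ _)
    · intro x hx
      exact ((hderiv x hx).differentiableAt.continuousAt).continuousWithinAt
    · intro x hx
      rw [interior_Ioo] at hx
      rw [(hderiv x hx).deriv]
      exact hDpos x hx
  have part1 : ∀ p₁ p₂ : ℝ, p_m < p₁ → p₁ < p₂ → p₂ < 1 → F p₁ < F p₂ := by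
    intro p₁ p₂ h1 h2 h3
    exact mono ⟨h1, lt_trans h2 h3⟩ ⟨lt_trans h1 h2, h3⟩ h2
  refine ⟨part1, ?_⟩
  intro p_c hc1 hc2 p hp hcp
  have hc0 : 0 < p_c := lt_trans hpm0 hc1
  have hFc : 0 < F p_c := by
    rw [hF]
    have hL : Real.log p_c < 0 := Real.log_neg hc0 hc2
    have h1 : n * P_W / (p_c * Real.log p_c) < 0 :=
      div_neg_of_pos_of_neg hb (mul_neg_of_pos_of_neg hc0 hL)
    have h2 : 0 < (P_T - P_W) / p_c := div_pos ha hc0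
    linarith
  rcases eq_or_lt_of_le hcp with h | h
  · rw [h]
  · exact one_div_le_one_div_of_le hFc (le_of_lt (part1 p_c p hc1 h hp.2))
end
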